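/- Every α-free economy with social justice admits a pure strategy Nash equilibrium: for any α ∈ [0,1], the finite strategic form game in which player i's payoff at profile x is ES^α_i(f,x) = α·Sh_i(f,x) + (1-α)·f(x)/n has a pure strategy Nash equilibrium. -/

import Mathlib

open Finset

noncomputable section

variable {ι : Type*}

/-- Sub-profile of `x` relative to the reference profile `o`:
agents in `S` play their `x`-coordinate, all others play their reference action. -/
def subp [DecidableEq ι] {X : ι → Type*} (o x : ∀ i, X i) (S : Finset ι) : ∀ i, X i :=
  fun j => if j ∈ S then x j else o j

/-- The set of active agents at profile `x` (those deviating from the reference `o`). -/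
def active [DecidableEq ι] [Fintype ι] {X : ι → Type*} [∀ i, DecidableEq (X i)]
    (o x : ∀ i, X i) : Finset ι :=
  Finset.univ.filter fun j => x j ≠ o j

/-- The multivariate Shapley pay scheme. -/
def Sh [DecidableEq ι] [Fintype ι] {X : ι → Type*} [∀ i, DecidableEq (X i)]
    (o : ∀ i, X i) (f : (∀ i, X i) → ℝ) (i : ι) (x : ∀ i, X i) : ℝ :=
  ∑ S ∈ ((active o x).erase i).powerset,
    ((S.card.factorial * ((active o x).card - S.card - 1).factorial : ℝ) /
        ((active o x).card.factorial)) *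
      (f (subp o x (insert i S)) - f (subp o x S))

end

noncomputable section

/-- The egalitarian Shapley pay scheme with meritocratic weight `α`. -/
def ES {ι : Type*} [DecidableEq ι] [Fintype ι] {X : ι → Type*} [∀ i, DecidableEq (X i)]
    (α : ℝ) (o : ∀ i, X i) (f : (∀ i, X i) → ℝ) (i : ι) (x : ∀ i, X i) : ℝ :=
  α * Sh o f i x + (1 - α) * f x / (Fintype.card ι)

end

open Finset

noncomputable section PotAux

variable {ι : Type*}

/-- Hart–Mas-Colell style potential for the Shapley pay scheme. -/
def pot [DecidableEq ι] [Fintype ι] {X : ι → Type*} [∀ i, DecidableEq (X i)]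
    (o : ∀ i, X i) (f : (∀ i, X i) → ℝ) (x : ∀ i, X i) : ℝ :=
  ∑ S ∈ (active o x).powerset,
    (((S.card - 1).factorial * ((active o x).card - S.card).factorial : ℝ) /
        ((active o x).card.factorial)) * f (subp o x S)

lemma fact_id {a t : ℕ} (ht : 1 ≤ t) (hta : t ≤ a - 1) (ha : 1 ≤ a) :
    ((t-1).factorial * ((a-1) - t).factorial : ℝ) / (a-1).factorial
      = ((t-1).factorial * (a - t).factorial : ℝ) / a.factorial
        + ((t).factorial * (a - t - 1).factorial : ℝ) / a.factorial := by
  obtain ⟨t', rfl⟩ : ∃ t', t = t' + 1 := ⟨t-1, by omega⟩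
  obtain ⟨b, rfl⟩ : ∃ b, a = t' + 1 + b + 1 := ⟨a - 1 - (t'+1), by omega⟩
  have h1 : t' + 1 + b + 1 - 1 = t' + 1 + b := by omega
  have h2 : t' + 1 - 1 = t' := by omega
  have h3 : t' + 1 + b - (t' + 1) = b := by omega
  have h4 : t' + 1 + b + 1 - (t' + 1) = b + 1 := by omega
  have h5 : t' + 1 + b + 1 - (t' + 1) - 1 = b := by omega
  rw [h1, h2, h3, h5, h4]
  have e1 : (t' + 1 + b + 1).factorial = (t' + 1 + b + 1) * (t' + 1 + b).factorial :=
    Nat.factorial_succ _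
  have e2 : (b + 1).factorial = (b + 1) * b.factorial := Nat.factorial_succ _
  have e3 : (t' + 1).factorial = (t' + 1) * t'.factorial := Nat.factorial_succ _
  have p1 : ((t' + 1 + b).factorial : ℝ) ≠ 0 := by positivity
  have p2 : ((t' + 1 + b + 1).factorial : ℝ) ≠ 0 := by positivity
  rw [e1, e2, e3]
  field_simp
  push_cast
  ring

lemma subp_empty [DecidableEq ι] {X : ι → Type*} (o x : ∀ i, X i) :
    subp o x (∅ : Finset ι) = o := by
  funext j; simp [subp]

lemma sh_pot [DecidableEq ι] [Fintype ι] {X : ι → Type*} [∀ i, DecidableEq (X i)]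
    (o : ∀ i, X i) (f : (∀ i, X i) → ℝ) (hf : f o = 0) (i : ι) (x : ∀ i, X i) :
    Sh o f i x = pot o f x - pot o f (Function.update x i (o i)) := by
  by_cases hiA : i ∈ active o x
  · -- active case
    set A := active o x with hA
    have hcardpos : 1 ≤ A.card := Finset.card_pos.mpr ⟨i, hiA⟩
    set B := A.erase i with hB
    have hiB : i ∉ B := Finset.notMem_erase i A
    have hBcard : B.card = A.card - 1 := Finset.card_erase_of_mem hiA
    -- active set of the updated profile
    have hact : active o (Function.update x i (o i)) = B := by
      ext j
      by_cases h : j = i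
      · subst h; simp [hB, hA, active, Function.update_self]
      · simp [hB, hA, active, Function.update_of_ne h, Finset.mem_erase, h]
    -- subp of updated profile
    have hsubp : ∀ S : Finset ι, i ∉ S →
        subp o (Function.update x i (o i)) S = subp o x S := by
      intro S hiS
      funext j
      by_cases h : j ∈ S
      · have : j ≠ i := fun e => hiS (e ▸ h)
        simp [subp, h, Function.update_of_ne this]
      · simp [subp, h]
    have hupdate : pot o f (Function.update x i (o i)) =
        ∑ T ∈ B.powerset,
          (((T.card - 1).factorial * (B.card - T.card).factorial : ℝ) /
            (B.card.factorial)) * f (subp o x T) := by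
      rw [pot, hact]
      refine Finset.sum_congr rfl fun T hT => ?_
      rw [hsubp T (fun h => hiB (Finset.mem_powerset.mp hT h))]
    have hAins : A = insert i B := (Finset.insert_erase hiA).symm
    have hpotx : pot o f x =
        ∑ T ∈ B.powerset,
          ((((T.card - 1).factorial * (A.card - T.card).factorial : ℝ) /
              (A.card.factorial)) * f (subp o x T)
          + ((T.card.factorial * (A.card - T.card - 1).factorial : ℝ) /
              (A.card.factorial)) * f (subp o x (insert i T))) := by
      rw [pot, show (active o x).powerset = (insert i B).powerset from by
            rw [← hA, ← hAins],
          Finset.sum_powerset_insert hiB, Finset.sum_add_distrib]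
      congr 1
      refine Finset.sum_congr rfl fun T hT => ?_
      have hiT : i ∉ T := fun h => hiB (Finset.mem_powerset.mp hT h)
      rw [Finset.card_insert_of_notMem hiT]
      simp only [Nat.add_sub_cancel, Nat.sub_sub]
      rfl
    rw [Sh]
    rw [show (active o x).erase i = B from rfl, show active o x = A from rfl]
    rw [hpotx, hupdate, ← Finset.sum_sub_distrib]
    refine Finset.sum_congr rfl fun T hT => ?_
    have hTB : T ⊆ B := Finset.mem_powerset.mp hT
    have hTcard : T.card ≤ A.card - 1 := hBcard ▸ Finset.card_le_card hTB
    rcases Nat.eq_zero_or_pos T.card with h0 | hpos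
    · -- T empty
      have : T = ∅ := Finset.card_eq_zero.mp h0
      subst this
      simp [subp_empty, hf, h0]
    · have := fact_id hpos hTcard hcardpos
      rw [hBcard, this]
      ring
  · -- i not active: update is trivial and each Shapley summand vanishes
    have hxi : x i = o i := by
      by_contra h
      exact hiA (Finset.mem_filter.mpr ⟨Finset.mem_univ i, h⟩)
    have hupd : Function.update x i (o i) = x := by
      rw [← hxi]; exact Function.update_eq_self i x
    rw [hupd, sub_self, Sh]
    refine Finset.sum_eq_zero fun S hS => ?_
    have hiS : i ∉ S := fun h' =>
      (Finset.notMem_erase i _) (Finset.mem_powerset.mp hS h')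
    have : subp o x (insert i S) = subp o x S := by
      funext j
      by_cases h : j = i
      · subst h; simp [subp, hiS, hxi]
      · simp [subp, Finset.mem_insert, h]
    rw [this, sub_self, mul_zero]

end PotAux

/-- Every α-free economy with social justice admits a pure strategy
Nash equilibrium. -/
theorem stmt_8 {ι : Type*} [DecidableEq ι] [Fintype ι] {X : ι → Type*}
    [∀ i, Fintype (X i)] [∀ i, DecidableEq (X i)]
    (o : ∀ i, X i) (f : (∀ i, X i) → ℝ) (hf : f o = 0)
    (α : ℝ) (hα0 : 0 ≤ α) (hα1 : α ≤ 1) :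
    ∃ xs : ∀ i, X i, ∀ i : ι, ∀ y : X i,
      ES α o f i (Function.update xs i y) ≤ ES α o f i xs := by
  obtain ⟨xs, -, hxs⟩ := Finset.exists_max_image Finset.univ
    (fun z : ∀ i, X i => α * pot o f z + (1 - α) * f z / (Fintype.card ι))
    ⟨o, Finset.mem_univ o⟩
  refine ⟨xs, fun i y => ?_⟩
  have key : ∀ z : ∀ i, X i, ES α o f i z =
      (α * pot o f z + (1 - α) * f z / (Fintype.card ι))
        - α * pot o f (Function.update z i (o i)) := by
    intro z
    rw [ES, sh_pot o f hf i z]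
    ring
  have hupd : Function.update (Function.update xs i y) i (o i)
      = Function.update xs i (o i) := by simp
  rw [key xs, key (Function.update xs i y), hupd]
  have h := hxs (Function.update xs i y) (Finset.mem_univ _)
  linarith
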